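/- Let Ω ⊂ ℝ² be bounded measurable with |Ω| > 0, γ_AA, γ_BB > 0, and γ_AB > √(γ_AA γ_BB). Then for all nonnegative f_A, f_B ∈ L²(Ω) with ∫ f_A = ∫ f_B = 1/2, the energy E[f_A,f_B] = ∫_Ω ((γ_AA/2) f_A² + γ_AB f_A f_B + (γ_BB/2) f_B²) dx satisfies E[f_A,f_B] ≥ (√γ_AA + √γ_BB)²/(8|Ω|), and moreover if equality holds then f_A(x) f_B(x) = 0 almost everywhere. -/

import Mathlib

open MeasureTheory
open scoped ENNReal NNReal

private lemma mul_int {α : Type*} [MeasurableSpace α] {μ : Measure α}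
    {u v : α → ℝ} (hu : MemLp u 2 μ) (hv : MemLp v 2 μ) :
    Integrable (fun x => u x * v x) μ := by
  have h : (1:ℝ≥0∞)/1 = 1/2 + 1/2 := by
    rw [one_div, one_div, inv_one]
    exact (ENNReal.inv_two_add_inv_two).symm
  have := hu.smul hv (r := 1)
  exact memLp_one_iff_integrable.mp (by convert this using 1; ext x; simp [smul_eq_mul, mul_comm])

set_option maxHeartbeats 1000000 in
/-- For strong interspecies repulsion `γAB > √(γAA γBB)`, the energy is bounded
below by the phase-separated optimum, with equality only for segregated states. -/
theorem stmt_4 (Ω : Set (EuclideanSpace ℝ (Fin 2)))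
    (hΩm : MeasurableSet Ω) (hΩb : Bornology.IsBounded Ω)
    (hΩpos : 0 < volume Ω)
    (γAA γBB γAB : ℝ) (hAA : 0 < γAA) (hBB : 0 < γBB)
    (hAB : Real.sqrt (γAA * γBB) < γAB) :
    ∀ fA fB : EuclideanSpace ℝ (Fin 2) → ℝ,
      MemLp fA 2 (volume.restrict Ω) → MemLp fB 2 (volume.restrict Ω) →
      (∀ x ∈ Ω, 0 ≤ fA x) → (∀ x ∈ Ω, 0 ≤ fB x) →
      (∫ x in Ω, fA x) = 1/2 → (∫ x in Ω, fB x) = 1/2 →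
      ((Real.sqrt γAA + Real.sqrt γBB) ^ 2 / (8 * (volume Ω).toReal) ≤
        ∫ x in Ω, (γAA/2 * fA x ^ 2 + γAB * fA x * fB x + γBB/2 * fB x ^ 2)) ∧
      ((∫ x in Ω, (γAA/2 * fA x ^ 2 + γAB * fA x * fB x + γBB/2 * fB x ^ 2))
          = (Real.sqrt γAA + Real.sqrt γBB) ^ 2 / (8 * (volume Ω).toReal) →
        ∀ᵐ x ∂(volume.restrict Ω), fA x * fB x = 0) := by
  intro fA fB hfA hfB hA0 hB0 hIA hIB
  set μ := volume.restrict Ω with hμdef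
  have hfin : volume Ω < ⊤ := hΩb.measure_lt_top
  haveI : IsFiniteMeasure μ := ⟨by rw [hμdef, Measure.restrict_apply_univ]; exact hfin⟩
  set V : ℝ := (volume Ω).toReal with hVdef
  have hVpos : 0 < V := ENNReal.toReal_pos hΩpos.ne' hfin.ne
  set a := Real.sqrt γAA with hadef
  set b := Real.sqrt γBB with hbdef
  have ha : 0 < a := Real.sqrt_pos.mpr hAA
  have hb : 0 < b := Real.sqrt_pos.mpr hBB
  have ha2 : a ^ 2 = γAA := Real.sq_sqrt hAA.le
  have hb2 : b ^ 2 = γBB := Real.sq_sqrt hBB.le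
  have hab : a * b = Real.sqrt (γAA * γBB) := (Real.sqrt_mul hAA.le _).symm
  set c : ℝ := γAB - Real.sqrt (γAA * γBB) with hcdef
  have hc : 0 < c := sub_pos.mpr hAB
  -- a.e. nonnegativity
  have hA0' : 0 ≤ᵐ[μ] fA := (ae_restrict_iff' hΩm).mpr (Filter.Eventually.of_forall hA0)
  have hB0' : 0 ≤ᵐ[μ] fB := (ae_restrict_iff' hΩm).mpr (Filter.Eventually.of_forall hB0)
  -- the combination g
  set g : EuclideanSpace ℝ (Fin 2) → ℝ := fun x => a * fA x + b * fB x with hgdef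
  have hg2 : MemLp g 2 μ := (hfA.const_mul a).add (hfB.const_mul b)
  have hg0' : 0 ≤ᵐ[μ] g := by
    filter_upwards [hA0', hB0'] with x hxA hxB
    exact add_nonneg (mul_nonneg ha.le hxA) (mul_nonneg hb.le hxB)
  -- integrability facts
  have hig2 : Integrable (fun x => g x ^ 2) μ := by
    simpa [sq] using mul_int hg2 hg2
  have higAB : Integrable (fun x => fA x * fB x) μ := mul_int hfA hfB
  have hiA : Integrable fA μ := hfA.integrable one_le_two
  have hiB : Integrable fB μ := hfB.integrable one_le_two
  -- pointwise identity
  have hpt : ∀ x, γAA/2 * fA x ^ 2 + γAB * fA x * fB x + γBB/2 * fB x ^ 2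
      = 1/2 * g x ^ 2 + c * (fA x * fB x) := by
    intro x
    rw [hgdef, hcdef]
    linear_combination (-(fA x ^ 2) / 2) * ha2 + (-(fB x ^ 2) / 2) * hb2
      - (fA x * fB x) * hab
  have key : (∫ x, (γAA/2 * fA x ^ 2 + γAB * fA x * fB x + γBB/2 * fB x ^ 2) ∂μ)
      = 1/2 * (∫ x, g x ^ 2 ∂μ) + c * (∫ x, fA x * fB x ∂μ) := by
    simp only [hpt]
    rw [integral_add (hig2.const_mul _) (higAB.const_mul _),
      integral_const_mul, integral_const_mul]
  -- ∫ g = (a+b)/2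
  have hIg : (∫ x, g x ∂μ) = (a + b) / 2 := by
    simp only [hgdef]
    rw [integral_add (hiA.const_mul a) (hiB.const_mul b),
      integral_const_mul, integral_const_mul]
    rw [hIA, hIB]; ring
  -- Cauchy–Schwarz
  have hg2' : MemLp g (ENNReal.ofReal 2) μ := by
    have : (2:ℝ≥0∞) = ENNReal.ofReal 2 := by norm_num
    rwa [← this]
  have hone : MemLp (fun _ : EuclideanSpace ℝ (Fin 2) => (1:ℝ)) (ENNReal.ofReal 2) μ :=
    memLp_const 1
  have hCS := integral_mul_le_Lp_mul_Lq_of_nonneg (μ := μ)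
    (Real.holderConjugate_iff.mpr ⟨one_lt_two, by norm_num⟩) hg0'
    (Filter.Eventually.of_forall fun _ => zero_le_one) hg2' hone
  have hint1 : (∫ _x, (1:ℝ) ^ (2:ℝ) ∂μ) = V := by
    rw [hμdef, hVdef]
    simp [Measure.restrict_apply_univ, Measure.real]
  clear_value μ V a b c g
  have hrp : (∫ x, g x ^ (2:ℝ) ∂μ) = ∫ x, g x ^ 2 ∂μ := by
    refine integral_congr_ae ?_
    filter_upwards [hg0'] with x hx
    rw [Real.rpow_two]
  have hg2nn : 0 ≤ ∫ x, g x ^ 2 ∂μ :=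
    integral_nonneg fun x => sq_nonneg _
  have hCS2 : ((a + b) / 2) ^ 2 ≤ (∫ x, g x ^ 2 ∂μ) * V := by
    have h1 : (a + b) / 2 ≤ Real.sqrt ((∫ x, g x ^ 2 ∂μ) * V) := by
      have := hCS
      rw [hint1, hrp] at this
      simp only [mul_one] at this
      rw [hIg] at this
      calc (a + b) / 2 ≤ (∫ x, g x ^ 2 ∂μ) ^ (1/(2:ℝ)) * V ^ (1/(2:ℝ)) := this
        _ = Real.sqrt ((∫ x, g x ^ 2 ∂μ) * V) := by
            rw [← Real.sqrt_eq_rpow, ← Real.sqrt_eq_rpow, ← Real.sqrt_mul hg2nn]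
    have h2 : 0 ≤ (a + b) / 2 := by positivity
    calc ((a + b) / 2) ^ 2 ≤ Real.sqrt ((∫ x, g x ^ 2 ∂μ) * V) ^ 2 :=
          pow_le_pow_left₀ h2 h1 2
      _ = (∫ x, g x ^ 2 ∂μ) * V := Real.sq_sqrt (mul_nonneg hg2nn hVpos.le)
  -- lower bound on the quadratic part
  have hhalf : (a + b) ^ 2 / (8 * V) ≤ 1/2 * (∫ x, g x ^ 2 ∂μ) := by
    rw [div_le_iff₀ (by positivity)]
    nlinarith [hCS2]
  -- nonnegativity of mixed term
  have hInn : 0 ≤ ∫ x, fA x * fB x ∂μ := by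
    refine integral_nonneg_of_ae ?_
    filter_upwards [hA0', hB0'] with x hxA hxB
    exact mul_nonneg hxA hxB
  have hbound : (a + b) ^ 2 / (8 * V)
      ≤ ∫ x, (γAA/2 * fA x ^ 2 + γAB * fA x * fB x + γBB/2 * fB x ^ 2) ∂μ := by
    rw [key]
    have : 0 ≤ c * ∫ x, fA x * fB x ∂μ := mul_nonneg hc.le hInn
    linarith
  refine ⟨hbound, ?_⟩
  intro hEq
  have hzero : (∫ x, fA x * fB x ∂μ) = 0 := by
    have h1 : 1/2 * (∫ x, g x ^ 2 ∂μ) + c * (∫ x, fA x * fB x ∂μ)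
        = (a + b) ^ 2 / (8 * V) := by rw [← key]; exact hEq
    have h2 : c * (∫ x, fA x * fB x ∂μ) ≤ 0 := by linarith
    have h3 : (∫ x, fA x * fB x ∂μ) ≤ 0 := by
      by_contra h
      push_neg at h
      nlinarith
    linarith
  have hnn : 0 ≤ᵐ[μ] fun x => fA x * fB x := by
    filter_upwards [hA0', hB0'] with x hxA hxB
    exact mul_nonneg hxA hxB
  have hae : (fun x => fA x * fB x) =ᵐ[μ] 0 :=
    (integral_eq_zero_iff_of_nonneg_ae hnn higAB).mp hzero
  filter_upwards [hae] with x hx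
  exact hx
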